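/- As X → ∞, one has log X · ∫_{1}^{2 − 2/X} 1 / ( (log(2 − t) + log X) · t ) dt → log 2. -/

import Mathlib

open Real Filter intervalIntegral MeasureTheory

noncomputable def Fx (X : ℝ) : ℝ → ℝ :=
  (Set.Ioc 1 (2 - 2 / X)).indicator
    (fun t => Real.log X / ((Real.log (2 - t) + Real.log X) * t))

lemma bound_integrable :
    IntegrableOn (fun t : ℝ => 1 + (2 / Real.log 2) * (2 - t) ^ (-(1/2) : ℝ))
      (Set.Ioc 1 2) := by
  have h1 : IntervalIntegrable (fun x : ℝ => x ^ (-(1/2) : ℝ)) volume 0 1 :=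
    intervalIntegral.intervalIntegrable_rpow' (by norm_num)
  have h2 : IntervalIntegrable (fun x : ℝ => (2 - x) ^ (-(1/2) : ℝ)) volume 1 2 := by
    have h := (h1.comp_sub_left 2).symm
    simp only [show (2:ℝ) - 1 = 1 by norm_num] at h
    simpa using h
  have h3 : IntervalIntegrable (fun t : ℝ => 1 + (2 / Real.log 2) * (2 - t) ^ (-(1/2) : ℝ))
      volume 1 2 := by
    exact (_root_.intervalIntegrable_const).add (h2.const_mul _)
  exact (intervalIntegrable_iff_integrableOn_Ioc_of_le (by norm_num)).mp h3

/-- As X → ∞, log X · ∫_1^{2−2/X} dt / ((log(2−t) + log X) t) → log 2. -/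
theorem integral_J_asymptotics :
    Filter.Tendsto (fun X : ℝ =>
        Real.log X * ∫ t in (1:ℝ)..(2 - 2 / X),
          1 / ((Real.log (2 - t) + Real.log X) * t))
      Filter.atTop (nhds (Real.log 2)) := by
  have hlog2 : (0:ℝ) < Real.log 2 := Real.log_pos (by norm_num)
  -- main limit via dominated convergence
  have key : Filter.Tendsto (fun X : ℝ => ∫ t in Set.Ioc (1:ℝ) 2, Fx X t)
      Filter.atTop (nhds (∫ t in Set.Ioc (1:ℝ) 2, 1 / t)) := by
    apply MeasureTheory.tendsto_integral_filter_of_dominated_convergence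
      (fun t : ℝ => 1 + (2 / Real.log 2) * (2 - t) ^ (-(1/2) : ℝ))
    · filter_upwards with X
      apply AEStronglyMeasurable.indicator _ measurableSet_Ioc
      exact (measurable_const.div
        (((Real.measurable_log.comp (measurable_const.sub measurable_id)).add
          measurable_const).mul measurable_id)).aestronglyMeasurable
    · filter_upwards [eventually_ge_atTop (4:ℝ)] with X hX
      rw [MeasureTheory.ae_restrict_iff' measurableSet_Ioc]
      filter_upwards with t ht
      have hX0 : (0:ℝ) < X := by linarith
      by_cases hmem : t ∈ Set.Ioc (1:ℝ) (2 - 2 / X)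
      · have ht1 : (1:ℝ) < t := hmem.1
        have ht2 : t ≤ 2 - 2 / X := hmem.2
        have h2t : 2 / X ≤ 2 - t := by linarith
        have h2tpos : (0:ℝ) < 2 - t := lt_of_lt_of_le (by positivity) h2t
        have hc : Real.log (2 - t) ≤ 0 :=
          Real.log_nonpos (by linarith) (by linarith)
        have hL : Real.log 2 ≤ Real.log (2 - t) + Real.log X := by
          have := Real.log_le_log (by positivity) h2t
          rw [Real.log_div (by norm_num) (ne_of_gt hX0)] at this
          linarith
        have hLpos : 0 < Real.log (2 - t) + Real.log X := lt_of_lt_of_le hlog2 hL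
        have hFval : Fx X t = Real.log X / ((Real.log (2 - t) + Real.log X) * t) := by
          simp [Fx, Set.indicator_of_mem hmem]
        have hlogX : 0 ≤ Real.log X := Real.log_nonneg (by linarith)
        have hFnonneg : 0 ≤ Fx X t := by
          rw [hFval]
          exact div_nonneg hlogX (mul_nonneg hLpos.le (by linarith))
        rw [Real.norm_eq_abs, abs_of_nonneg hFnonneg, hFval]
        -- log X / (L t) ≤ log X / L ≤ 1 + (-log(2-t))/log 2 ≤ bound
        have step1 : Real.log X / ((Real.log (2 - t) + Real.log X) * t)
            ≤ Real.log X / (Real.log (2 - t) + Real.log X) := by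
          apply div_le_div_of_nonneg_left _ hLpos
          · nlinarith
          · nlinarith
        have step2 : Real.log X / (Real.log (2 - t) + Real.log X)
            ≤ 1 + (-Real.log (2 - t)) / Real.log 2 := by
          have hd : 0 ≤ -Real.log (2 - t) / Real.log 2 :=
            div_nonneg (by linarith) hlog2.le
          have hdl : (-Real.log (2 - t) / Real.log 2) * Real.log 2 = -Real.log (2 - t) :=
            div_mul_cancel₀ _ (ne_of_gt hlog2)
          rw [div_le_iff₀ hLpos]
          nlinarith [mul_le_mul_of_nonneg_left hL hd]
        have step3 : -Real.log (2 - t) ≤ 2 * (2 - t) ^ (-(1/2) : ℝ) := by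
          have hs : (0:ℝ) < (2 - t) ^ (-(1/2) : ℝ) := Real.rpow_pos_of_pos h2tpos _
          have : Real.log ((2 - t) ^ (-(1/2) : ℝ)) ≤ (2 - t) ^ (-(1/2) : ℝ) - 1 :=
            Real.log_le_sub_one_of_pos hs
          rw [Real.log_rpow h2tpos] at this
          nlinarith
        have : (-Real.log (2 - t)) / Real.log 2 ≤ (2 / Real.log 2) * (2 - t) ^ (-(1/2) : ℝ) := by
          rw [div_le_iff₀ hlog2]
          calc -Real.log (2-t) ≤ 2 * (2 - t) ^ (-(1/2) : ℝ) := step3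
            _ = 2 / Real.log 2 * (2 - t) ^ (-(1/2):ℝ) * Real.log 2 := by
                field_simp
        linarith
      · have : Fx X t = 0 := Set.indicator_of_notMem hmem _
        rw [this, norm_zero]
        have h2t : 0 ≤ 2 - t := by linarith [ht.2]
        have : 0 ≤ (2 - t) ^ (-(1/2) : ℝ) := Real.rpow_nonneg h2t _
        positivity
    · exact bound_integrable
    · -- pointwise limit a.e.
      have hae : ∀ᵐ t ∂(volume.restrict (Set.Ioc (1:ℝ) 2)), t ∈ Set.Ioc (1:ℝ) 2 ∧ t ≠ 2 := by
        refine (MeasureTheory.ae_restrict_mem measurableSet_Ioc).and ?_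
        refine MeasureTheory.ae_restrict_of_ae ?_
        exact MeasureTheory.ae_iff.mpr (by simp [MeasureTheory.measure_singleton,
          (by ext x; simp : {a : ℝ | ¬ a ≠ 2} = {2})])
      filter_upwards [hae] with t ⟨ht, hne⟩
      have ht1 : (1:ℝ) < t := ht.1
      have ht2 : t < 2 := lt_of_le_of_ne ht.2 hne
      set c := Real.log (2 - t) with hc
      have hdenom : Filter.Tendsto (fun X : ℝ => c + Real.log X) Filter.atTop Filter.atTop :=
        Filter.tendsto_atTop_add_const_left _ _ Real.tendsto_log_atTop
      have hratio : Filter.Tendsto (fun X : ℝ => Real.log X / (c + Real.log X))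
          Filter.atTop (nhds 1) := by
        have h1 : Filter.Tendsto (fun X : ℝ => 1 - c / (c + Real.log X))
            Filter.atTop (nhds (1 - 0)) :=
          Filter.Tendsto.const_sub _ (Filter.Tendsto.div_atTop tendsto_const_nhds hdenom)
        rw [sub_zero] at h1
        apply h1.congr'
        filter_upwards [hdenom.eventually_gt_atTop 0] with X hX
        field_simp
        ring
      have hlim : Filter.Tendsto (fun X : ℝ => Real.log X / ((c + Real.log X) * t))
          Filter.atTop (nhds (1 / t)) := by
        have := hratio.mul (tendsto_const_nhds (x := 1 / t))
        rw [one_mul] at this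
        apply this.congr
        intro X
        rw [div_mul_div_comm, mul_one]
      apply hlim.congr'
      filter_upwards [eventually_ge_atTop (2 / (2 - t))] with X hX
      have hmem : t ∈ Set.Ioc (1:ℝ) (2 - 2 / X) := by
        constructor
        · exact ht1
        · have h2tpos : (0:ℝ) < 2 - t := by linarith
          have hXpos : (0:ℝ) < X := lt_of_lt_of_le (by positivity) hX
          rw [div_le_iff₀ h2tpos] at hX
          rw [le_sub_iff_add_le, ← le_sub_iff_add_le', div_le_iff₀ hXpos]
          nlinarith
      simp [Fx, Set.indicator_of_mem hmem, hc]
  -- compute the limit integral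
  have hval : (∫ t in Set.Ioc (1:ℝ) 2, 1 / t) = Real.log 2 := by
    rw [← intervalIntegral.integral_of_le (by norm_num : (1:ℝ) ≤ 2),
      integral_one_div (by norm_num : (0:ℝ) ∉ Set.uIcc (1:ℝ) 2)]
    norm_num
  rw [← hval]
  apply key.congr'
  filter_upwards [eventually_ge_atTop (4:ℝ)] with X hX
  have hXpos : (0:ℝ) < X := by linarith
  have hle : (1:ℝ) ≤ 2 - 2 / X := by
    rw [le_sub_iff_add_le, ← le_sub_iff_add_le']
    rw [div_le_iff₀ hXpos]; linarith
  have hle2 : 2 - 2 / X ≤ 2 := by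
    have : 0 < 2 / X := by positivity
    linarith
  rw [show Fx X = (Set.Ioc 1 (2 - 2/X)).indicator
      (fun t => Real.log X / ((Real.log (2 - t) + Real.log X) * t)) from rfl,
    MeasureTheory.setIntegral_indicator measurableSet_Ioc,
    Set.Ioc_inter_Ioc, max_self, min_eq_right hle2,
    ← intervalIntegral.integral_of_le hle, ← intervalIntegral.integral_const_mul]
  congr 1
  ext t
  rw [mul_one_div]
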